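/- Let K = K_V be the complete graph on V with all off-diagonal conductances equal to 1. For every k ≥ 1 and every f : Ξ_k → ℝ in the kernel of the creation operator (that is, Σ_{x∈V} (ξ_x + α_x) f(ξ+δ_x) = 0 for every ξ ∈ Ξ_{k−1}), one has E_{K,α,k}(f) = k·(|α|+k−1)·‖f‖²_{α,k}, where ‖f‖²_{α,k} = Σ_{η∈Ξ_k} μ_{α,k}(η) f(η)². -/

import Mathlib

open scoped BigOperators Classical

noncomputable section

/-- The configuration space of `k` particles on the finite site set `V`. -/
def Config (V : Type*) [Fintype V] (k : ℕ) : Type _ :=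
  {η : V → ℕ // ∑ x, η x = k}

namespace Config

variable {V : Type*} [Fintype V] [DecidableEq V] {k : ℕ}

lemma apply_le (η : Config V k) (x : V) : η.1 x ≤ k := by
  have h := Finset.single_le_sum (f := η.1) (fun i _ => Nat.zero_le _) (Finset.mem_univ x)
  simpa [η.2] using h

instance instFintype : Fintype (Config V k) :=
  Fintype.ofInjective
    (fun η : Config V k => (fun x => (⟨η.1 x, Nat.lt_succ_of_le (η.apply_le x)⟩ : Fin (k+1))))
    (fun a b hab => Subtype.ext (funext fun x => congrArg Fin.val (congrFun hab x)))

/-- The configuration `η - δ_x + δ_y` (move a particle from `x` to `y`);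
by convention it is `η` itself when `η` has no particle at `x`. -/
def move (η : Config V k) (x y : V) : Config V k :=
  if h : η.1 x = 0 then η else
    ⟨fun z => η.1 z - (if z = x then 1 else 0) + (if z = y then 1 else 0), by
      have hle : ∀ z : V, (if z = x then 1 else 0) ≤ η.1 z := fun z => by
        by_cases hz : z = x
        · simpa [hz] using Nat.one_le_iff_ne_zero.2 h
        · simp [hz]
      have cast_term : ∀ z : V,
          ((η.1 z - (if z = x then 1 else 0) + (if z = y then 1 else 0) : ℕ) : ℤ)
            = (η.1 z : ℤ) - (if z = x then 1 else 0) + (if z = y then 1 else 0) := by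
        intro z
        rw [Nat.cast_add, Nat.cast_sub (hle z)]
        by_cases hz : z = x <;> by_cases hz' : z = y <;> simp [hz, hz']
      have key : ((∑ z, (η.1 z - (if z = x then 1 else 0) + (if z = y then 1 else 0)) : ℕ) : ℤ)
          = (k : ℤ) := by
        rw [Nat.cast_sum]
        rw [Finset.sum_congr rfl (fun z _ => cast_term z)]
        rw [Finset.sum_add_distrib, Finset.sum_sub_distrib]
        have h1 : (∑ z, (η.1 z : ℤ)) = (k : ℤ) := by
          rw [← Nat.cast_sum, η.2]
        rw [h1]
        simp
      exact_mod_cast key⟩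

/-- The configuration `η + δ_x`. -/
def addOne (η : Config V k) (x : V) : Config V (k + 1) :=
  ⟨fun z => η.1 z + (if z = x then 1 else 0), by
    rw [Finset.sum_add_distrib, η.2]
    simp⟩

end Config

section Defs

variable {V : Type*} [Fintype V] [DecidableEq V]

/-- The configuration with `k` particles stacked at `x`. -/
def stackConfig (V : Type*) [Fintype V] [DecidableEq V] (k : ℕ) (x : V) : Config V k :=
  ⟨fun z => if z = x then k else 0, by simp⟩

/-- Normalization constant `Z_{α,k}`. -/
def sipZ (α : V → ℝ) (k : ℕ) : ℝ :=
  Real.Gamma ((∑ x, α x) + k) / (Real.Gamma (∑ x, α x) * (Nat.factorial k))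

/-- The reversible (Dirichlet-multinomial) measure `μ_{α,k}` of SIP. -/
def sipMeasure (α : V → ℝ) {k : ℕ} (η : Config V k) : ℝ :=
  (sipZ α k)⁻¹ * ∏ x, Real.Gamma (α x + η.1 x) / (Real.Gamma (α x) * (Nat.factorial (η.1 x)))

/-- The Dirichlet form of `SIP_k(G, α)`. -/
def dirichletForm (c : V → V → ℝ) (α : V → ℝ) {k : ℕ} (f : Config V k → ℝ) : ℝ :=
  (1 / 2) * ∑ η : Config V k, ∑ x, ∑ y,
    sipMeasure α η * (c x y * η.1 x * (α y + η.1 y) * (f (η.move x y) - f η) ^ 2)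

/-- Mean of `f` under `μ_{α,k}`. -/
def sipMean (α : V → ℝ) {k : ℕ} (f : Config V k → ℝ) : ℝ :=
  ∑ η : Config V k, sipMeasure α η * f η

/-- Variance of `f` under `μ_{α,k}`. -/
def sipVar (α : V → ℝ) {k : ℕ} (f : Config V k → ℝ) : ℝ :=
  ∑ η : Config V k, sipMeasure α η * (f η - sipMean α f) ^ 2

/-- Squared `L²(μ_{α,k})`-norm of `f`. -/
def sipNormSq (α : V → ℝ) {k : ℕ} (f : Config V k → ℝ) : ℝ :=
  ∑ η : Config V k, sipMeasure α η * (f η) ^ 2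

/-- The spectral gap `gap_k(G,α)` of the `k`-particle SIP. -/
def sipGap (c : V → V → ℝ) (α : V → ℝ) (k : ℕ) : ℝ :=
  sInf {r : ℝ | ∃ f : Config V k → ℝ, (∃ η ζ : Config V k, f η ≠ f ζ) ∧
    r = dirichletForm c α f / sipVar α f}

/-- `gap_SIP(G,α) = inf_{k ≥ 2} gap_k(G,α)`. -/
def sipGapInf (c : V → V → ℝ) (α : V → ℝ) : ℝ :=
  sInf {r : ℝ | ∃ k : ℕ, 2 ≤ k ∧ r = sipGap c α k}

/-- The simple graph underlying a symmetric family of conductances. -/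
def graphOf (c : V → V → ℝ) : SimpleGraph V where
  Adj x y := x ≠ y ∧ (0 < c x y ∨ 0 < c y x)
  symm := ⟨fun x y h => ⟨h.1.symm, h.2.symm⟩⟩
  loopless := ⟨fun x h => h.1 rfl⟩

/-- The diameter of the weighted graph: maximal graph distance between two sites. -/
def graphDiam (c : V → V → ℝ) : ℕ :=
  Finset.univ.sup (fun p : V × V => (graphOf c).dist p.1 p.2)

/-- The minimal positive conductance. -/
def cMin (c : V → V → ℝ) : ℝ :=
  sInf {r : ℝ | 0 < r ∧ ∃ x y, c x y = r}

/-- Minimal site weight. -/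
def alphaMin (α : V → ℝ) : ℝ := sInf (Set.range α)

/-- Maximal site weight. -/
def alphaMax (α : V → ℝ) : ℝ := sSup (Set.range α)

/-- Conductances of the complete graph on `V`. -/
def completeCond (V : Type*) [DecidableEq V] : V → V → ℝ :=
  fun x y => if x = y then 0 else 1

/-- The generator matrix of `SIP_k(G,α)` acting on `ℝ^{Ξ_k}` by `mulVec`. -/
def sipMatrix (c : V → V → ℝ) (α : V → ℝ) (k : ℕ) : Matrix (Config V k) (Config V k) ℝ :=
  fun η ζ => ∑ x, ∑ y, c x y * η.1 x * (α y + η.1 y) *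
    ((if η.move x y = ζ then 1 else 0) - (if ζ = η then 1 else 0))

/-- The generator matrix `A_{β,k}` of `k` independent random walks. -/
def rwPartMatrix (c : V → V → ℝ) (β : V → ℝ) (k : ℕ) : Matrix (Config V k) (Config V k) ℝ :=
  fun η ζ => ∑ x, ∑ y, c x y * η.1 x * β y *
    ((if η.move x y = ζ then 1 else 0) - (if ζ = η then 1 else 0))

/-- The generator matrix `B_k` of the pure interaction (fast) dynamics. -/
def clumpMatrix (c : V → V → ℝ) (k : ℕ) : Matrix (Config V k) (Config V k) ℝ :=
  fun η ζ => ∑ x, ∑ y, c x y * η.1 x * η.1 y *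
    ((if η.move x y = ζ then 1 else 0) - (if ζ = η then 1 else 0))

/-- The generator matrix of the purely absorbing (killed) SIP. -/
def killedMatrix (c : V → V → ℝ) (α ω : V → ℝ) (k : ℕ) :
    Matrix (Config V k) (Config V k) ℝ :=
  fun η ζ => sipMatrix c α k η ζ - (if ζ = η then ∑ x, ω x * η.1 x else 0)

/-- `η ∈ Ω_k`: absorbing configurations for the fast dynamics. -/
def inOmega (c : V → V → ℝ) {k : ℕ} (η : Config V k) : Prop :=
  ∀ x y, c x y * η.1 x * η.1 y = 0

/-- The number of occupied sites (stacks) of a configuration. -/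
def numStacks {k : ℕ} (η : Config V k) : ℕ :=
  (Finset.univ.filter fun x => 0 < η.1 x).card

/-- Jump rates of `k` independent random walks: `r^A(η,ζ)`. -/
def rateA (c : V → V → ℝ) (β : V → ℝ) {k : ℕ} (η ζ : Config V k) : ℝ :=
  ∑ x, ∑ y, if η.1 x ≠ 0 ∧ η.move x y = ζ then c x y * η.1 x * β y else 0

/-- Metastable jump rates `r^M(η,ξ) = Σ_ζ r^A(η,ζ) h_ξ(ζ)`, given absorption
probabilities `h`. -/
def rateM (c : V → V → ℝ) (β : V → ℝ) {k : ℕ} (h : Config V k → Config V k → ℝ)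
    (η ξ : Config V k) : ℝ :=
  ∑ ζ, rateA c β η ζ * h ξ ζ

/-- The metastable generator on `Ω_k`, given absorption probabilities `h`. -/
def metaGen (c : V → V → ℝ) (β : V → ℝ) {k : ℕ} (h : Config V k → Config V k → ℝ)
    (g : Config V k → ℝ) (η : Config V k) : ℝ :=
  ∑ ξ, if inOmega c ξ ∧ ξ ≠ η then rateM c β h η ξ * (g ξ - g η) else 0

/-- The (restricted) annihilation operator `â_{k+1} g (η) = Σ_x η_x g(η - δ_x)`. -/
def annihilate {k : ℕ} (g : Config V k → ℝ) (η : Config V (k + 1)) : ℝ :=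
  ∑ x, ∑ ξ : Config V k, if ξ.addOne x = η then (η.1 x : ℝ) * g ξ else 0

/-- The SIP generator as an operator on functions. -/
def sipGen (c : V → V → ℝ) (α : V → ℝ) {k : ℕ} (f : Config V k → ℝ) (η : Config V k) : ℝ :=
  ∑ x, ∑ y, c x y * η.1 x * (α y + η.1 y) * (f (η.move x y) - f η)

/-- The purely absorbing (killed) SIP generator. -/
def killedGen (c : V → V → ℝ) (α ω : V → ℝ) {k : ℕ} (f : Config V k → ℝ)
    (η : Config V k) : ℝ :=
  sipGen c α f η - f η * ∑ x, ω x * η.1 x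

/-- Spectral gap of the killed `k`-particle SIP (Rayleigh quotient infimum). -/
def killedGap (c : V → V → ℝ) (α ω : V → ℝ) (k : ℕ) : ℝ :=
  sInf {r : ℝ | ∃ f : Config V k → ℝ, f ≠ 0 ∧
    r = (∑ η, sipMeasure α η * f η * (-(killedGen c α ω f η))) / sipNormSq α f}

/-- `λ_{k,k}(β)`: the variational bottom eigenvalue of `k` independent walks killed
upon two particles becoming adjacent. -/
def lamLevel (c : V → V → ℝ) (β : V → ℝ) (k : ℕ) : ℝ :=
  sInf {r : ℝ | ∃ f : Config V k → ℝ, f ≠ 0 ∧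
    (∀ η : Config V k, ¬(inOmega c η ∧ numStacks η = k) → f η = 0) ∧
    r = dirichletForm c β f / sipNormSq β f}


/-- The symmetrizing measure `ς_{β,k,m}` on stack configurations. -/
def stackMeasure (β : V → ℝ) {k : ℕ} (η : Config V k) : ℝ :=
  ∏ x, if 0 < η.1 x then β x / η.1 x else 1

/-- The lookdown generator of the SIP with killing, on labeled configurations. -/
def lookdownGen (c : V → V → ℝ) (α ω : V → ℝ) (k : ℕ) (φ : (Fin k → V) → ℝ)
    (v : Fin k → V) : ℝ :=
  (∑ i : Fin k, ∑ x, ∑ y, c x y * (if x = v i then 1 else 0) *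
      (α y + 2 * ∑ j : Fin k, (if (j : ℕ) < (i : ℕ) ∧ v j = y then 1 else 0)) *
      (φ (Function.update v i y) - φ v))
    - φ v * ∑ i, ω (v i)

/-- The unlabeling map `Φ_k` from labeled to unlabeled configurations. -/
def unlabel {k : ℕ} (v : Fin k → V) : Config V k :=
  ⟨fun z => (Finset.univ.filter fun i => v i = z).card, by
    have h := Finset.card_eq_sum_card_fiberwise
      (f := v) (s := Finset.univ) (t := Finset.univ) (fun i _ => Finset.mem_univ _)
    simpa using h.symm⟩

/-- The symmetrization operator `S_k`. -/
def symmetrize (k : ℕ) (φ : (Fin k → V) → ℝ) (v : Fin k → V) : ℝ :=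
  (1 / (Nat.factorial k : ℝ)) * ∑ σ : Equiv.Perm (Fin k), φ (fun i => v (σ i))

/-- `η + δ_x` on the full configuration space `ℕ^V`. -/
def addFn (η : V → ℕ) (x : V) : V → ℕ := fun z => η z + (if z = x then 1 else 0)

/-- `η - δ_x` on the full configuration space (truncated subtraction). -/
def remFn (η : V → ℕ) (x : V) : V → ℕ := fun z => η z - (if z = x then 1 else 0)

/-- `η - δ_x + δ_y` on the full configuration space; `η` itself when `η x = 0`. -/
def moveFn (η : V → ℕ) (x y : V) : V → ℕ :=
  if η x = 0 then η else fun z => η z - (if z = x then 1 else 0) + (if z = y then 1 else 0)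

/-- The generator of the non-conservative (open) SIP. -/
def openGen (c : V → V → ℝ) (α ω θ : V → ℝ) (f : (V → ℕ) → ℝ) (η : V → ℕ) : ℝ :=
  (∑ x, ∑ y, c x y * η x * (α y + η y) * (f (moveFn η x y) - f η))
  + ∑ x, ω x * ((η x : ℝ) * (1 + θ x) * (f (remFn η x) - f η)
      + θ x * (α x + η x) * (f (addFn η x) - f η))

/-- One-site Meixner duality function at density `0`:
`d_{a,0}(m,n) = (n!/(n-m)!) (Γ(a)/Γ(a+m)) 1{m ≤ n}`. -/
def dualD0 (a : ℝ) (m n : ℕ) : ℝ :=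
  if m ≤ n then (Nat.descFactorial n m : ℝ) * (Real.Gamma a / Real.Gamma (a + m)) else 0

/-- One-site Meixner duality function at density `ϱ`. -/
def dualD (a ϱ : ℝ) (m n : ℕ) : ℝ :=
  ∑ l ∈ Finset.range (m + 1), (Nat.choose m l : ℝ) * dualD0 a l n * (-ϱ) ^ (m - l)

/-- The orthogonal duality function `D_{α,ϱ}(ξ,η)`. -/
def dualityFn (α : V → ℝ) (ϱ : ℝ) {k : ℕ} (ξ : Config V k) (η : V → ℕ) : ℝ :=
  ∏ x, dualD (α x) ϱ (ξ.1 x) (η x)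

/-- The polynomial `F_{α,ϱ}^ψ` associated to `ψ : Ξ_k → ℝ`. -/
def liftF (α : V → ℝ) (ϱ : ℝ) {k : ℕ} (ψ : Config V k → ℝ) (η : V → ℕ) : ℝ :=
  ∑ ξ : Config V k, sipMeasure α ξ * ψ ξ * dualityFn α ϱ ξ η

end Defs


end

noncomputable section Aux

variable {V : Type*} [Fintype V] [DecidableEq V]

lemma move_apply {k : ℕ} (η : Config V k) {x : V} (h : η.1 x ≠ 0) (y z : V) :
    (η.move x y).1 z = η.1 z - (if z = x then 1 else 0) + (if z = y then 1 else 0) := by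
  unfold Config.move
  exact congrArg (fun ζ : Config V k => ζ.1 z) (dif_neg h)

lemma move_self {k : ℕ} (η : Config V k) (x : V) : η.move x x = η := by
  by_cases h : η.1 x = 0
  · simp [Config.move, h]
  · apply Subtype.ext; funext z
    rw [move_apply η h]
    by_cases hz : z = x
    · subst hz
      have := Nat.one_le_iff_ne_zero.2 h
      simp; omega
    · simp [hz]

lemma move_apply_y {k : ℕ} (η : Config V k) {x y : V} (hxy : x ≠ y) (h : η.1 x ≠ 0) :
    (η.move x y).1 y = η.1 y + 1 := by
  rw [move_apply η h]
  simp [Ne.symm hxy]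

lemma move_apply_x {k : ℕ} (η : Config V k) {x y : V} (hxy : x ≠ y) (h : η.1 x ≠ 0) :
    (η.move x y).1 x = η.1 x - 1 := by
  rw [move_apply η h]
  simp [hxy]

lemma move_move {k : ℕ} (η : Config V k) {x y : V} (hxy : x ≠ y) (h : η.1 x ≠ 0) :
    (η.move x y).move y x = η := by
  have h2 : (η.move x y).1 y ≠ 0 := by
    rw [move_apply_y η hxy h]; omega
  apply Subtype.ext; funext z
  rw [move_apply _ h2, move_apply η h]
  have h1 := Nat.one_le_iff_ne_zero.2 h
  by_cases hz : z = x <;> by_cases hz' : z = y <;>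
    simp [hz, hz', hxy, Ne.symm hxy] <;> omega

/-- Remove one particle at `x`. -/
def Config.drop {k : ℕ} (η : Config V (k + 1)) (x : V) (h : η.1 x ≠ 0) : Config V k := by
  refine ⟨fun z => η.1 z - (if z = x then 1 else 0), ?_⟩
  show (∑ z, (η.1 z - if z = x then 1 else 0)) = k
  have h1 := Nat.one_le_iff_ne_zero.2 h
  have hs : ∑ z, (η.1 z - (if z = x then 1 else 0)) + ∑ z, (if z = x then 1 else 0)
      = ∑ z, η.1 z := by
    rw [← Finset.sum_add_distrib]
    refine Finset.sum_congr rfl (fun z _ => ?_)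
    by_cases hz : z = x
    · subst hz; simp; omega
    · simp [hz]
  have h2 : (∑ z, (if z = x then 1 else 0)) = 1 := by simp
  have h3 := η.2
  omega

lemma drop_addOne {k : ℕ} (η : Config V (k + 1)) {x : V} (h : η.1 x ≠ 0) (y : V) :
    (η.drop x h).addOne y = η.move x y := by
  apply Subtype.ext; funext z
  show η.1 z - (if z = x then 1 else 0) + (if z = y then 1 else 0) = _
  rw [move_apply η h]

lemma drop_cast {k : ℕ} (η : Config V (k + 1)) {x : V} (h : η.1 x ≠ 0) (z : V) :
    (((η.drop x h).1 z : ℝ)) = (η.1 z : ℝ) - (if z = x then 1 else 0) := by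
  show ((η.1 z - (if z = x then 1 else 0) : ℕ) : ℝ) = _
  by_cases hz : z = x
  · subst hz
    have h1 := Nat.one_le_iff_ne_zero.2 h
    rw [if_pos rfl, if_pos rfl, Nat.cast_sub h1, Nat.cast_one]
  · simp [hz]

lemma sum_alpha_eta (α : V → ℝ) {k : ℕ} (η : Config V k) :
    ∑ y, (α y + (η.1 y : ℝ)) = (∑ y, α y) + k := by
  rw [Finset.sum_add_distrib, ← Nat.cast_sum, η.2]

lemma sum_eta (η : Config V k) : ∑ y, ((η.1 y : ℝ)) = k := by
  rw [← Nat.cast_sum, η.2]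

lemma row_sum (α : V → ℝ) {k : ℕ} (f : Config V (k + 1) → ℝ)
    (hker : ∀ ξ : Config V k, ∑ x, ((ξ.1 x : ℝ) + α x) * f (ξ.addOne x) = 0)
    (η : Config V (k + 1)) (x : V) (h : η.1 x ≠ 0) :
    ∑ y, completeCond V x y * (α y + (η.1 y : ℝ)) * (f η - f (η.move x y))
      = ((∑ z, α z) + k) * f η := by
  set ξ := η.drop x h with hξ
  have key : ∀ y, completeCond V x y * (α y + (η.1 y : ℝ)) * (f η - f (η.move x y))
      = (α y + (η.1 y : ℝ)) * (f η - f (η.move x y))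
        - (if y = x then (α y + (η.1 y : ℝ)) * (f η - f (η.move x y)) else 0) := by
    intro y
    by_cases hy : y = x
    · subst hy; simp [completeCond]
    · simp [completeCond, Ne.symm hy, hy]
  rw [Finset.sum_congr rfl (fun y _ => key y), Finset.sum_sub_distrib,
    Finset.sum_ite_eq' Finset.univ x
      (fun y => (α y + (η.1 y : ℝ)) * (f η - f (η.move x y)))]
  simp only [Finset.mem_univ, if_true, move_self, sub_self, mul_zero, sub_zero]
  have expand : ∀ y, (α y + (η.1 y : ℝ)) * (f η - f (η.move x y))
      = (α y + (η.1 y : ℝ)) * f η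
        - (((ξ.1 y : ℝ) + α y) * f (ξ.addOne y) + (if y = x then 1 else 0) * f (ξ.addOne y)) := by
    intro y
    rw [drop_addOne η h y]
    have : (α y + (η.1 y : ℝ)) = ((ξ.1 y : ℝ) + α y) + (if y = x then 1 else 0) := by
      rw [hξ, drop_cast η h y]; ring
    rw [this]; ring
  rw [Finset.sum_congr rfl (fun y _ => expand y), Finset.sum_sub_distrib,
    Finset.sum_add_distrib, hker ξ, ← Finset.sum_mul, sum_alpha_eta α η]
  have : ∑ y, (if y = x then (1 : ℝ) else 0) * f (ξ.addOne y) = f (ξ.addOne x) := by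
    rw [Finset.sum_congr rfl (fun y _ => by rw [ite_mul, one_mul, zero_mul]),
      Finset.sum_ite_eq' Finset.univ x (fun y => f (ξ.addOne y))]
    simp
  rw [this, drop_addOne η h x, move_self]
  push_cast
  ring

lemma gen_eigen (α : V → ℝ) {k : ℕ} (f : Config V (k + 1) → ℝ)
    (hker : ∀ ξ : Config V k, ∑ x, ((ξ.1 x : ℝ) + α x) * f (ξ.addOne x) = 0)
    (η : Config V (k + 1)) :
    ∑ x, ∑ y, completeCond V x y * (η.1 x : ℝ) * (α y + (η.1 y : ℝ))
        * (f η - f (η.move x y))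
      = ((k : ℝ) + 1) * ((∑ z, α z) + k) * f η := by
  have hrow : ∀ x, ∑ y, completeCond V x y * (η.1 x : ℝ) * (α y + (η.1 y : ℝ))
      * (f η - f (η.move x y))
      = (η.1 x : ℝ) * (((∑ z, α z) + k) * f η) := by
    intro x
    by_cases h : η.1 x = 0
    · simp [h]
    · have factor : (∑ y, completeCond V x y * (η.1 x : ℝ) * (α y + (η.1 y : ℝ))
          * (f η - f (η.move x y))) = (η.1 x : ℝ) * ∑ y, completeCond V x y
          * (α y + (η.1 y : ℝ)) * (f η - f (η.move x y)) := by
        rw [Finset.mul_sum]; exact Finset.sum_congr rfl fun y _ => by ring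
      rw [factor, row_sum α f hker η x h]
  rw [Finset.sum_congr rfl (fun x _ => hrow x), ← Finset.sum_mul, sum_eta]
  push_cast
  ring

lemma two_site (a b : ℝ) (ha : 0 < a) (hb : 0 < b) (n m : ℕ) :
    Real.Gamma (a + ((n : ℝ) + 1)) / (Real.Gamma a * (Nat.factorial (n + 1)))
      * (Real.Gamma (b + m) / (Real.Gamma b * (Nat.factorial m))) * ((n : ℝ) + 1) * (b + m)
    = Real.Gamma (a + n) / (Real.Gamma a * (Nat.factorial n))
      * (Real.Gamma (b + ((m : ℝ) + 1)) / (Real.Gamma b * (Nat.factorial (m + 1))))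
      * ((m : ℝ) + 1) * (a + n) := by
  have han : (0 : ℝ) < a + n := by positivity
  have hbm : (0 : ℝ) < b + m := by positivity
  have h1 : Real.Gamma (a + ((n : ℝ) + 1)) = (a + n) * Real.Gamma (a + n) := by
    rw [show a + ((n : ℝ) + 1) = (a + n) + 1 by ring, Real.Gamma_add_one han.ne']
  have h2 : Real.Gamma (b + ((m : ℝ) + 1)) = (b + m) * Real.Gamma (b + m) := by
    rw [show b + ((m : ℝ) + 1) = (b + m) + 1 by ring, Real.Gamma_add_one hbm.ne']
  have hfa : ((Nat.factorial (n + 1) : ℝ)) = ((n : ℝ) + 1) * (Nat.factorial n : ℝ) := by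
    rw [Nat.factorial_succ]; push_cast; ring
  have hfb : ((Nat.factorial (m + 1) : ℝ)) = ((m : ℝ) + 1) * (Nat.factorial m : ℝ) := by
    rw [Nat.factorial_succ]; push_cast; ring
  have hga := (Real.Gamma_pos_of_pos ha).ne'
  have hgb := (Real.Gamma_pos_of_pos hb).ne'
  have hfan : ((Nat.factorial n : ℝ)) ≠ 0 := Nat.cast_ne_zero.2 (Nat.factorial_ne_zero n)
  have hfam : ((Nat.factorial m : ℝ)) ≠ 0 := Nat.cast_ne_zero.2 (Nat.factorial_ne_zero m)
  rw [h1, h2, hfa, hfb]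
  field_simp

lemma detailed_balance (α : V → ℝ) (hα : ∀ x, 0 < α x) {k : ℕ} (η : Config V k)
    {x y : V} (hxy : x ≠ y) (h : η.1 x ≠ 0) :
    sipMeasure α η * (η.1 x : ℝ) * (α y + (η.1 y : ℝ))
      = sipMeasure α (η.move x y) * (((η.move x y).1 y : ℝ))
        * (α x + ((η.move x y).1 x : ℝ)) := by
  obtain ⟨n, hn⟩ := Nat.exists_eq_succ_of_ne_zero h
  set ζ := η.move x y with hζ
  have hzx : ζ.1 x = n := by rw [hζ, move_apply_x η hxy h, hn, Nat.succ_sub_one]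
  have hzy : ζ.1 y = η.1 y + 1 := by rw [hζ, move_apply_y η hxy h]
  have hz : ∀ z, z ≠ x → z ≠ y → ζ.1 z = η.1 z := by
    intro z h1 h2; rw [hζ, move_apply η h]; simp [h1, h2]
  unfold sipMeasure
  set g : (V → ℕ) → V → ℝ := fun c z =>
    Real.Gamma (α z + c z) / (Real.Gamma (α z) * (Nat.factorial (c z))) with hg
  have hyx : y ∈ Finset.univ.erase x := Finset.mem_erase.2 ⟨Ne.symm hxy, Finset.mem_univ y⟩
  have split : ∀ c : V → ℕ, (∏ z, g c z)
      = g c x * (g c y * ∏ z ∈ (Finset.univ.erase x).erase y, g c z) := by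
    intro c
    rw [← Finset.mul_prod_erase Finset.univ (g c) (Finset.mem_univ x),
      ← Finset.mul_prod_erase (Finset.univ.erase x) (g c) hyx]
  have tail : (∏ z ∈ (Finset.univ.erase x).erase y, g ζ.1 z)
      = ∏ z ∈ (Finset.univ.erase x).erase y, g η.1 z := by
    refine Finset.prod_congr rfl (fun z hzmem => ?_)
    rw [Finset.mem_erase] at hzmem
    have hz2 := Finset.mem_erase.1 hzmem.2
    rw [hg]; simp only
    rw [hz z hz2.1 hzmem.1]
  show (sipZ α k)⁻¹ * (∏ z, g η.1 z) * (η.1 x : ℝ) * (α y + (η.1 y : ℝ))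
      = (sipZ α k)⁻¹ * (∏ z, g ζ.1 z) * ((ζ.1 y : ℝ)) * (α x + (ζ.1 x : ℝ))
  rw [split η.1, split ζ.1, tail]
  have key := two_site (α x) (α y) (hα x) (hα y) n (η.1 y)
  have e1 : g η.1 x = Real.Gamma (α x + ((n : ℝ) + 1))
      / (Real.Gamma (α x) * (Nat.factorial (n + 1))) := by
    rw [hg]; simp only [hn, Nat.succ_eq_add_one, Nat.cast_add, Nat.cast_one]
  have e2 : g η.1 y = Real.Gamma (α y + (η.1 y : ℝ))
      / (Real.Gamma (α y) * (Nat.factorial (η.1 y))) := rfl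
  have e3 : g ζ.1 x = Real.Gamma (α x + (n : ℝ))
      / (Real.Gamma (α x) * (Nat.factorial n)) := by
    rw [hg]; simp only; rw [hzx]
  have e4 : g ζ.1 y = Real.Gamma (α y + ((η.1 y : ℝ) + 1))
      / (Real.Gamma (α y) * (Nat.factorial (η.1 y + 1))) := by
    rw [hg]; simp only [hzy, Nat.cast_add, Nat.cast_one]
  rw [e1, e2, e3, e4, hn, hzx, hzy]
  push_cast
  linear_combination ((sipZ α k)⁻¹ * ∏ z ∈ (Finset.univ.erase x).erase y, g η.1 z) * key

end Aux

set_option maxHeartbeats 4000000 in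
theorem complete_graph_dirichlet_on_kernel
    {V : Type*} [Fintype V] [DecidableEq V] (α : V → ℝ) (hα : ∀ x, 0 < α x)
    (k : ℕ) (f : Config V (k + 1) → ℝ)
    (hker : ∀ ξ : Config V k, ∑ x, ((ξ.1 x : ℝ) + α x) * f (ξ.addOne x) = 0) :
    dirichletForm (completeCond V) α f
      = ((k + 1 : ℝ)) * ((∑ x, α x) + (k + 1 : ℝ) - 1) * sipNormSq α f := by
  classical
  -- nested sums over `Config × V × V` equal sums over the product type
  have hform : ∀ g : Config V (k + 1) × V × V → ℝ,
      (∑ η : Config V (k + 1), ∑ x, ∑ y, g (η, x, y))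
        = ∑ p : Config V (k + 1) × V × V, g p := by
    intro g
    rw [Fintype.sum_prod_type]
    exact Finset.sum_congr rfl fun η _ => (Fintype.sum_prod_type (fun q : V × V => g (η, q))).symm
  -- reflection bijection on the product type
  have hbij : (∑ p : Config V (k + 1) × V × V,
        sipMeasure α p.1 * (completeCond V p.2.1 p.2.2 * ((p.1.1 p.2.1 : ℝ))
          * (α p.2.2 + ((p.1.1 p.2.2 : ℝ))) * f (p.1.move p.2.1 p.2.2) ^ 2))
      = ∑ p : Config V (k + 1) × V × V,
        sipMeasure α p.1 * (completeCond V p.2.1 p.2.2 * ((p.1.1 p.2.1 : ℝ))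
          * (α p.2.2 + ((p.1.1 p.2.2 : ℝ))) * f p.1 ^ 2) := by
    have hz : ∀ (G : Config V (k + 1) × V × V → ℝ) (p : Config V (k + 1) × V × V),
        p ∈ Finset.univ → sipMeasure α p.1 * (completeCond V p.2.1 p.2.2
          * ((p.1.1 p.2.1 : ℝ)) * (α p.2.2 + ((p.1.1 p.2.2 : ℝ))) * G p) ≠ 0
          → p.2.1 ≠ p.2.2 ∧ p.1.1 p.2.1 ≠ 0 := by
      intro G p _ hne
      refine ⟨fun hxy => hne ?_, fun h0 => hne ?_⟩
      · simp [completeCond, hxy]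
      · simp [h0]
    rw [← Finset.sum_filter_of_ne (hz (fun p => f (p.1.move p.2.1 p.2.2) ^ 2)),
      ← Finset.sum_filter_of_ne (hz (fun p => f p.1 ^ 2))]
    refine Finset.sum_nbij' (fun p => (p.1.move p.2.1 p.2.2, p.2.2, p.2.1))
      (fun p => (p.1.move p.2.1 p.2.2, p.2.2, p.2.1)) ?_ ?_ ?_ ?_ ?_
    · rintro ⟨η, x, y⟩ hp
      rw [Finset.mem_filter] at hp ⊢
      obtain ⟨-, hxy, hx⟩ := hp
      refine ⟨Finset.mem_univ _, Ne.symm hxy, ?_⟩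
      show (η.move x y).1 y ≠ 0
      rw [move_apply_y η hxy hx]; omega
    · rintro ⟨η, x, y⟩ hp
      rw [Finset.mem_filter] at hp ⊢
      obtain ⟨-, hxy, hx⟩ := hp
      refine ⟨Finset.mem_univ _, Ne.symm hxy, ?_⟩
      show (η.move x y).1 y ≠ 0
      rw [move_apply_y η hxy hx]; omega
    · rintro ⟨η, x, y⟩ hp
      rw [Finset.mem_filter] at hp
      obtain ⟨-, hxy, hx⟩ := hp
      show ((η.move x y).move y x, x, y) = (η, x, y)
      rw [move_move η hxy hx]
    · rintro ⟨η, x, y⟩ hp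
      rw [Finset.mem_filter] at hp
      obtain ⟨-, hxy, hx⟩ := hp
      show ((η.move x y).move y x, x, y) = (η, x, y)
      rw [move_move η hxy hx]
    · rintro ⟨η, x, y⟩ hp
      rw [Finset.mem_filter] at hp
      obtain ⟨-, hxy, hx⟩ := hp
      show sipMeasure α η * (completeCond V x y * ((η.1 x : ℝ))
            * (α y + ((η.1 y : ℝ))) * f (η.move x y) ^ 2)
          = sipMeasure α (η.move x y) * (completeCond V y x * (((η.move x y).1 y : ℝ))
            * (α x + (((η.move x y).1 x : ℝ))) * f (η.move x y) ^ 2)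
      have hc1 : completeCond V x y = 1 := by simp [completeCond, hxy]
      have hc2 : completeCond V y x = 1 := by simp [completeCond, Ne.symm hxy]
      rw [hc1, hc2]
      have db := detailed_balance α hα η hxy hx
      linear_combination f (η.move x y) ^ 2 * db
  -- main computation
  calc dirichletForm (completeCond V) α f
      = (1/2) * ∑ p : Config V (k + 1) × V × V,
          sipMeasure α p.1 * (completeCond V p.2.1 p.2.2 * ((p.1.1 p.2.1 : ℝ))
            * (α p.2.2 + ((p.1.1 p.2.2 : ℝ))) * (f (p.1.move p.2.1 p.2.2) - f p.1) ^ 2) := by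
        rw [dirichletForm]
        exact congrArg (fun t => 1/2 * t) (hform (fun p =>
          sipMeasure α p.1 * (completeCond V p.2.1 p.2.2 * ((p.1.1 p.2.1 : ℝ))
            * (α p.2.2 + ((p.1.1 p.2.2 : ℝ))) * (f (p.1.move p.2.1 p.2.2) - f p.1) ^ 2)))
    _ = (1/2) * ∑ p : Config V (k + 1) × V × V,
          (sipMeasure α p.1 * (completeCond V p.2.1 p.2.2 * ((p.1.1 p.2.1 : ℝ))
              * (α p.2.2 + ((p.1.1 p.2.2 : ℝ))) * f (p.1.move p.2.1 p.2.2) ^ 2)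
            - 2 * (sipMeasure α p.1 * (completeCond V p.2.1 p.2.2 * ((p.1.1 p.2.1 : ℝ))
              * (α p.2.2 + ((p.1.1 p.2.2 : ℝ))) * (f (p.1.move p.2.1 p.2.2) * f p.1)))
            + sipMeasure α p.1 * (completeCond V p.2.1 p.2.2 * ((p.1.1 p.2.1 : ℝ))
              * (α p.2.2 + ((p.1.1 p.2.2 : ℝ))) * f p.1 ^ 2)) := by
        congr 1
        exact Finset.sum_congr rfl fun p _ => by ring
    _ = (1/2) * ((∑ p : Config V (k + 1) × V × V,
          sipMeasure α p.1 * (completeCond V p.2.1 p.2.2 * ((p.1.1 p.2.1 : ℝ))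
            * (α p.2.2 + ((p.1.1 p.2.2 : ℝ))) * f (p.1.move p.2.1 p.2.2) ^ 2))
          - 2 * (∑ p : Config V (k + 1) × V × V,
            sipMeasure α p.1 * (completeCond V p.2.1 p.2.2 * ((p.1.1 p.2.1 : ℝ))
              * (α p.2.2 + ((p.1.1 p.2.2 : ℝ))) * (f (p.1.move p.2.1 p.2.2) * f p.1)))
          + ∑ p : Config V (k + 1) × V × V,
            sipMeasure α p.1 * (completeCond V p.2.1 p.2.2 * ((p.1.1 p.2.1 : ℝ))
              * (α p.2.2 + ((p.1.1 p.2.2 : ℝ))) * f p.1 ^ 2)) := by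
        rw [Finset.sum_add_distrib, Finset.sum_sub_distrib, ← Finset.mul_sum]
    _ = ∑ p : Config V (k + 1) × V × V,
          (sipMeasure α p.1 * (completeCond V p.2.1 p.2.2 * ((p.1.1 p.2.1 : ℝ))
              * (α p.2.2 + ((p.1.1 p.2.2 : ℝ))) * f p.1 ^ 2)
            - sipMeasure α p.1 * (completeCond V p.2.1 p.2.2 * ((p.1.1 p.2.1 : ℝ))
              * (α p.2.2 + ((p.1.1 p.2.2 : ℝ))) * (f (p.1.move p.2.1 p.2.2) * f p.1))) := by
        rw [hbij, Finset.sum_sub_distrib]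
        ring
    _ = ∑ η : Config V (k + 1), ∑ x, ∑ y,
          (sipMeasure α η * (completeCond V x y * ((η.1 x : ℝ))
              * (α y + ((η.1 y : ℝ))) * f η ^ 2)
            - sipMeasure α η * (completeCond V x y * ((η.1 x : ℝ))
              * (α y + ((η.1 y : ℝ))) * (f (η.move x y) * f η))) :=
        (hform (fun p =>
          sipMeasure α p.1 * (completeCond V p.2.1 p.2.2 * ((p.1.1 p.2.1 : ℝ))
              * (α p.2.2 + ((p.1.1 p.2.2 : ℝ))) * f p.1 ^ 2)
            - sipMeasure α p.1 * (completeCond V p.2.1 p.2.2 * ((p.1.1 p.2.1 : ℝ))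
              * (α p.2.2 + ((p.1.1 p.2.2 : ℝ))) * (f (p.1.move p.2.1 p.2.2) * f p.1)))).symm
    _ = ∑ η : Config V (k + 1), sipMeasure α η * f η
          * (((k : ℝ) + 1) * ((∑ z, α z) + (k : ℝ)) * f η) := by
        refine Finset.sum_congr rfl fun η _ => ?_
        have e : (∑ x, ∑ y,
            (sipMeasure α η * (completeCond V x y * ((η.1 x : ℝ))
                * (α y + ((η.1 y : ℝ))) * f η ^ 2)
              - sipMeasure α η * (completeCond V x y * ((η.1 x : ℝ))
                * (α y + ((η.1 y : ℝ))) * (f (η.move x y) * f η))))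
            = sipMeasure α η * f η * ∑ x, ∑ y, completeCond V x y * ((η.1 x : ℝ))
                * (α y + ((η.1 y : ℝ))) * (f η - f (η.move x y)) := by
          rw [Finset.mul_sum]
          refine Finset.sum_congr rfl fun x _ => ?_
          rw [Finset.mul_sum]
          exact Finset.sum_congr rfl fun y _ => by ring
        rw [e, gen_eigen α f hker η]
    _ = ((k + 1 : ℝ)) * ((∑ x, α x) + (k + 1 : ℝ) - 1) * sipNormSq α f := by
        rw [sipNormSq, Finset.mul_sum]
        exact Finset.sum_congr rfl fun η _ => by ring
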